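/- On the group ℤ/p × ℤ/p (p prime) with generators a = (1,0), b = (0,1), the operation defined by extending (a*b) = a bilinearly, i.e. (m₁,n₁)*(m₂,n₂) = (m₁n₂ − n₁m₂, 0), is a multiplicative Lie algebra structure that is neither trivial nor given by commutators. -/
import Mathlib

private lemma mla_aux1 (p : ℕ) (x : ZMod p × ZMod p) :
    ((x.1 * x.2 - x.2 * x.1, 0) : ZMod p × ZMod p) = 0 := by
  refine Prod.ext ?_ rfl; simp; ring

private lemma mla_aux2 (p : ℕ) (x y z : ZMod p × ZMod p) :
    ((x.1 * (y + z).2 - x.2 * (y + z).1, 0) : ZMod p × ZMod p) =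
      (x.1 * y.2 - x.2 * y.1, 0) + (x.1 * z.2 - x.2 * z.1, 0) := by
  refine Prod.ext ?_ ?_ <;> simp [Prod.fst_add, Prod.snd_add] <;> ring

private lemma mla_aux3 (p : ℕ) (x y z : ZMod p × ZMod p) :
    (((x + y).1 * z.2 - (x + y).2 * z.1, 0) : ZMod p × ZMod p) =
      (x.1 * z.2 - x.2 * z.1, 0) + (y.1 * z.2 - y.2 * z.1, 0) := by
  refine Prod.ext ?_ ?_ <;> simp [Prod.fst_add, Prod.snd_add] <;> ring

private lemma mla_aux4 (p : ℕ) (x y z : ZMod p × ZMod p) :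
    (((x.1 * y.2 - x.2 * y.1) * z.2 - (0:ZMod p) * z.1, 0) : ZMod p × ZMod p) +
      ((y.1 * z.2 - y.2 * z.1) * x.2 - (0:ZMod p) * x.1, 0) +
      ((z.1 * x.2 - z.2 * x.1) * y.2 - (0:ZMod p) * y.1, 0) = 0 := by
  refine Prod.ext ?_ ?_ <;> simp [Prod.fst_add, Prod.snd_add] <;> ring

/-- On `ZMod p × ZMod p` (p prime), the operation `(m₁,n₁)*(m₂,n₂) = (m₁n₂ − n₁m₂, 0)` is a
multiplicative Lie algebra structure (written additively, conjugation trivial) which is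
neither trivial nor given by commutators (commutators all vanish in an abelian group). -/
theorem zmodp_sq_nontrivial_mla (p : ℕ) (hp : p.Prime) :
    let G := ZMod p × ZMod p
    let f : G → G → G := fun x y => (x.1 * y.2 - x.2 * y.1, 0)
    (∀ x : G, f x x = 0) ∧
    (∀ x y z : G, f x (y + z) = f x y + f x z) ∧
    (∀ x y z : G, f (x + y) z = f x z + f y z) ∧
    (∀ x y z : G, f (f x y) z + f (f y z) x + f (f z x) y = 0) ∧
    (∃ x y : G, f x y ≠ 0) ∧
    (∃ x y : G, f x y ≠ x + y - x - y) := by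
  intro G f
  haveI : Fact p.Prime := ⟨hp⟩
  have h1 : (1 : ZMod p) ≠ 0 := one_ne_zero
  have key : ∀ x y : (ZMod p × ZMod p), f x y = (x.1 * y.2 - x.2 * y.1, 0) := fun _ _ => rfl
  refine ⟨fun x => mla_aux1 p x, fun x y z => mla_aux2 p x y z,
    fun x y z => mla_aux3 p x y z, fun x y z => mla_aux4 p x y z,
    ⟨(1,0), (0,1), ?_⟩, ⟨(1,0), (0,1), ?_⟩⟩
  · intro h
    have h2 : ((1*1 - 0*0 : ZMod p), (0:ZMod p)) = (0 : ZMod p × ZMod p) := h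
    have := (Prod.ext_iff.1 h2).1
    simp at this
  · intro h
    have h2 : ((1*1 - 0*0 : ZMod p), (0:ZMod p)) =
        ((1,0) : ZMod p × ZMod p) + (0,1) - (1,0) - (0,1) := h
    have := (Prod.ext_iff.1 h2).1
    simp [Prod.fst_add, Prod.fst_sub] at this
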